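/- Uniform convergence of the frozen-symbol potential minus the renormalization function: Let ρ be a Schwartz function on ℝ³, q = ρ̂(0), and a, A : ℝ³ → Sym(3,ℝ) measurable with C₀‖ξ‖² ≤ ξ·a(x)ξ ≤ C₁‖ξ‖² and C₀‖ξ‖² ≤ ξ·A(X)ξ ≤ C₁‖ξ‖², 0 < C₀ ≤ C₁. Define W^κ(X) = (2π)^{−3} ∫_{ℝ³} [ −c_X(X,ξ) + (1/2)K(X,ξ) d_X(X,ξ) ] |ρ̂(ξ/κ)|² dξ and E^κ(X) = −(1/2)(2π)^{−3} ∫_{ℝ³} (h₀(X,ξ)+1)^{−1/2} K(X,ξ)(K(X,ξ)+1)^{−2} |ρ̂(ξ/κ)|² dξ. Then all integrals converge absolutely and, as κ → ∞, W^κ(X) − E^κ(X) converges uniformly in X ∈ ℝ³ to L(X) = −|q|² (2π)^{−3} ∫_{ℝ³} (h₀(X,ξ)+1)^{−1/2}(K(X,ξ)+1)^{−2} dξ. -/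

import Mathlib

open MeasureTheory Filter

/-- The Fourier transform `ρ̂(ξ) = ∫ e^{-i x·ξ} ρ(x) dx` of a Schwartz function on ℝ³. -/
noncomputable def fourierHat (ρ : SchwartzMap (EuclideanSpace ℝ (Fin 3)) ℂ)
    (ξ : EuclideanSpace ℝ (Fin 3)) : ℂ :=
  ∫ x : EuclideanSpace ℝ (Fin 3),
    Complex.exp (-Complex.I * ((inner ℝ x ξ : ℝ) : ℂ)) * ρ x

/-- The quadratic form `ξ ↦ ξ · M(x) ξ` associated to a matrix-valued function. -/
def qform (M : EuclideanSpace ℝ (Fin 3) → Matrix (Fin 3) (Fin 3) ℝ)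
    (x ξ : EuclideanSpace ℝ (Fin 3)) : ℝ :=
  ∑ i, ∑ j, ξ i * M x i j * ξ j

open RealInnerProductSpace in
private lemma fourierHat_eq (ρ : SchwartzMap (EuclideanSpace ℝ (Fin 3)) ℂ)
    (ξ : EuclideanSpace ℝ (Fin 3)) :
    fourierHat ρ ξ = SchwartzMap.fourierTransformCLM ℂ ρ ((2 * Real.pi)⁻¹ • ξ) := by
  rw [SchwartzMap.fourierTransformCLM_apply, SchwartzMap.fourier_coe, Real.fourier_eq']
  unfold fourierHat
  refine integral_congr_ae (Filter.Eventually.of_forall fun x => ?_)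
  have h1 : ⟪x, (2 * Real.pi)⁻¹ • ξ⟫ = (2 * Real.pi)⁻¹ * ⟪x, ξ⟫ :=
    real_inner_smul_right _ _ _
  have h2 : (-2 * Real.pi * ⟪x, (2 * Real.pi)⁻¹ • ξ⟫ : ℝ) = -⟪x, ξ⟫ := by
    rw [h1]
    field_simp
  simp only [smul_eq_mul, h2]
  congr 1
  push_cast
  ring

private lemma fourierHat_continuous (ρ : SchwartzMap (EuclideanSpace ℝ (Fin 3)) ℂ) :
    Continuous (fourierHat ρ) := by
  have h : fourierHat ρ = fun ξ => SchwartzMap.fourierTransformCLM ℂ ρ ((2 * Real.pi)⁻¹ • ξ) :=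
    funext (fourierHat_eq ρ)
  rw [h]
  exact (SchwartzMap.continuous _).comp (continuous_const_smul _)

private lemma fourierHat_decay (ρ : SchwartzMap (EuclideanSpace ℝ (Fin 3)) ℂ) :
    ∃ C : ℝ, 0 < C ∧ ∀ ξ, ‖fourierHat ρ ξ‖ * (1 + ‖ξ‖) ^ 2 ≤ C := by
  set g := SchwartzMap.fourierTransformCLM ℂ ρ with hg
  obtain ⟨C0, hC0, h0⟩ := g.decay 0 0
  obtain ⟨C2, hC2, h2⟩ := g.decay 2 0
  refine ⟨(2 * Real.pi) ^ 2 * (2 * C0 + 2 * C2), by positivity, fun ξ => ?_⟩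
  have h0' := h0 ((2 * Real.pi)⁻¹ • ξ)
  have h2' := h2 ((2 * Real.pi)⁻¹ • ξ)
  rw [norm_iteratedFDeriv_zero] at h0' h2'
  simp only [pow_zero, one_mul] at h0'
  rw [fourierHat_eq]
  set u := (2 * Real.pi)⁻¹ • ξ with hu
  have hpi : (1 : ℝ) ≤ 2 * Real.pi := by nlinarith [Real.pi_gt_three]
  have hξ : ‖ξ‖ = 2 * Real.pi * ‖u‖ := by
    rw [hu, norm_smul, Real.norm_eq_abs, abs_inv,
      abs_of_pos (by positivity : (0:ℝ) < 2 * Real.pi)]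
    field_simp
  have key : ‖g u‖ * (1 + ‖u‖) ^ 2 ≤ 2 * C0 + 2 * C2 := by
    nlinarith [mul_nonneg (sq_nonneg (1 - ‖u‖)) (norm_nonneg (g u)), norm_nonneg u,
      norm_nonneg (g u), h0', h2']
  have h1' : (1 + ‖ξ‖) ^ 2 ≤ (2 * Real.pi) ^ 2 * (1 + ‖u‖) ^ 2 := by
    rw [hξ]
    nlinarith [norm_nonneg u, hpi, mul_nonneg (norm_nonneg u) (sub_nonneg.2 hpi),
      mul_nonneg (mul_nonneg (norm_nonneg u) (sub_nonneg.2 hpi)) (norm_nonneg u),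
      sq_nonneg (2 * Real.pi - 1)]
  nlinarith [norm_nonneg (g u), norm_nonneg ξ, norm_nonneg u]

private lemma qform_continuous (M : EuclideanSpace ℝ (Fin 3) → Matrix (Fin 3) (Fin 3) ℝ)
    (X : EuclideanSpace ℝ (Fin 3)) :
    Continuous fun ξ : EuclideanSpace ℝ (Fin 3) => qform M X ξ := by
  unfold qform
  refine continuous_finset_sum _ fun i _ => continuous_finset_sum _ fun j _ => ?_
  exact ((EuclideanSpace.proj (𝕜 := ℝ) i).continuous.mul continuous_const).mul
    (EuclideanSpace.proj (𝕜 := ℝ) j).continuous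

private lemma integrable_inv_pow_four :
    Integrable (fun ξ : EuclideanSpace ℝ (Fin 3) => ((1 + ‖ξ‖) ^ 4)⁻¹) := by
  have h3 : ((Module.finrank ℝ (EuclideanSpace ℝ (Fin 3)) : ℝ)) < 4 := by
    simp [finrank_euclideanSpace]; norm_num
  have h := integrable_one_add_norm (E := EuclideanSpace ℝ (Fin 3)) (μ := volume) (r := 4) h3
  refine h.congr (Filter.Eventually.of_forall fun ξ => ?_)
  have hpos : (0 : ℝ) < 1 + ‖ξ‖ := by positivity
  show (1 + ‖ξ‖) ^ (-(4:ℝ)) = ((1 + ‖ξ‖) ^ 4)⁻¹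
  rw [Real.rpow_neg hpos.le, show ((4:ℝ) = ((4:ℕ):ℝ)) by norm_num, Real.rpow_natCast]

set_option maxHeartbeats 2000000 in
/-- Uniform convergence of the frozen-symbol potential minus the renormalization
function: with `c_X(X,ξ) = (h₀(X,ξ)+1)^{-1/2}(K(X,ξ)+1)^{-1}` and
`d_X(X,ξ) = (h₀(X,ξ)+1)^{-1/2}(K(X,ξ)+1)^{-2}`, the potentials
`W^κ(X) = (2π)^{-3}∫ [-c_X(X,ξ) + (1/2)K(X,ξ)d_X(X,ξ)] |ρ̂(ξ/κ)|² dξ` and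
`E^κ(X) = -(1/2)(2π)^{-3}∫ (h₀(X,ξ)+1)^{-1/2}K(X,ξ)(K(X,ξ)+1)^{-2}|ρ̂(ξ/κ)|² dξ`
are absolutely convergent and `W^κ - E^κ` converges uniformly in `X` to
`L(X) = -|q|²(2π)^{-3}∫ (h₀(X,ξ)+1)^{-1/2}(K(X,ξ)+1)^{-2} dξ`, `q = ρ̂(0)`. -/
theorem frozen_symbol_potential_uniform_convergence
    (ρ : SchwartzMap (EuclideanSpace ℝ (Fin 3)) ℂ)
    (a A : EuclideanSpace ℝ (Fin 3) → Matrix (Fin 3) (Fin 3) ℝ)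
    (C₀ C₁ : ℝ) (hC₀ : 0 < C₀) (hC₀₁ : C₀ ≤ C₁)
    (ha_symm : ∀ x, (a x).IsSymm) (hA_symm : ∀ X, (A X).IsSymm)
    (ha_meas : ∀ i j, Measurable fun x => a x i j)
    (hA_meas : ∀ i j, Measurable fun X => A X i j)
    (ha_ell : ∀ x ξ : EuclideanSpace ℝ (Fin 3),
      C₀ * ‖ξ‖ ^ 2 ≤ qform a x ξ ∧ qform a x ξ ≤ C₁ * ‖ξ‖ ^ 2)
    (hA_ell : ∀ X ξ : EuclideanSpace ℝ (Fin 3),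
      C₀ * ‖ξ‖ ^ 2 ≤ qform A X ξ ∧ qform A X ξ ≤ C₁ * ‖ξ‖ ^ 2) :
    (∀ κ : ℝ, 1 ≤ κ → ∀ X : EuclideanSpace ℝ (Fin 3),
      Integrable (fun ξ : EuclideanSpace ℝ (Fin 3) =>
        (-((Real.sqrt (qform a X ξ + 1))⁻¹ * (qform A X ξ + 1)⁻¹) +
            1 / 2 * qform A X ξ *
              ((Real.sqrt (qform a X ξ + 1))⁻¹ * ((qform A X ξ + 1) ^ 2)⁻¹)) *
          ‖fourierHat ρ (κ⁻¹ • ξ)‖ ^ 2) ∧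
      Integrable (fun ξ : EuclideanSpace ℝ (Fin 3) =>
        (Real.sqrt (qform a X ξ + 1))⁻¹ * qform A X ξ * ((qform A X ξ + 1) ^ 2)⁻¹ *
          ‖fourierHat ρ (κ⁻¹ • ξ)‖ ^ 2)) ∧
    (∀ X : EuclideanSpace ℝ (Fin 3),
      Integrable (fun ξ : EuclideanSpace ℝ (Fin 3) =>
        (Real.sqrt (qform a X ξ + 1))⁻¹ * ((qform A X ξ + 1) ^ 2)⁻¹)) ∧
    ∀ ε : ℝ, 0 < ε → ∃ κ₀ : ℝ, ∀ κ : ℝ, κ₀ ≤ κ → ∀ X : EuclideanSpace ℝ (Fin 3),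
      |((2 * Real.pi) ^ 3 : ℝ)⁻¹ *
            (∫ ξ : EuclideanSpace ℝ (Fin 3),
              (-((Real.sqrt (qform a X ξ + 1))⁻¹ * (qform A X ξ + 1)⁻¹) +
                  1 / 2 * qform A X ξ *
                    ((Real.sqrt (qform a X ξ + 1))⁻¹ * ((qform A X ξ + 1) ^ 2)⁻¹)) *
                ‖fourierHat ρ (κ⁻¹ • ξ)‖ ^ 2) -
          (-(1 / 2) * ((2 * Real.pi) ^ 3 : ℝ)⁻¹ *
            ∫ ξ : EuclideanSpace ℝ (Fin 3),
              (Real.sqrt (qform a X ξ + 1))⁻¹ * qform A X ξ * ((qform A X ξ + 1) ^ 2)⁻¹ *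
                ‖fourierHat ρ (κ⁻¹ • ξ)‖ ^ 2) -
          (-(‖fourierHat ρ 0‖ ^ 2) * ((2 * Real.pi) ^ 3 : ℝ)⁻¹ *
            ∫ ξ : EuclideanSpace ℝ (Fin 3),
              (Real.sqrt (qform a X ξ + 1))⁻¹ * ((qform A X ξ + 1) ^ 2)⁻¹)| < ε := by
  classical
  obtain ⟨Cρ, hCρ, hdecay⟩ := fourierHat_decay ρ
  have hb1 : ∀ η, ‖fourierHat ρ η‖ ≤ Cρ / (1 + ‖η‖) ^ 2 := fun η =>
    (le_div_iff₀ (by positivity)).2 (hdecay η)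
  have hb0 : ∀ η, ‖fourierHat ρ η‖ ≤ Cρ := fun η => by
    refine (hb1 η).trans (div_le_self hCρ.le ?_)
    nlinarith [norm_nonneg η]
  set m := min C₀ 1 with hm
  have hm0 : 0 < m := lt_min hC₀ one_pos
  have hmC : m ≤ C₀ := min_le_left _ _
  have hm1 : m ≤ 1 := min_le_right _ _
  have hh0 : ∀ X ξ, 0 ≤ qform a X ξ := fun X ξ =>
    le_trans (by positivity) (ha_ell X ξ).1
  have hK0 : ∀ X ξ, 0 ≤ qform A X ξ := fun X ξ =>
    le_trans (by positivity) (hA_ell X ξ).1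
  have ht0 : ∀ X ξ, (0:ℝ) < qform A X ξ + 1 := fun X ξ => by nlinarith [hK0 X ξ]
  have hs1 : ∀ X ξ, 1 ≤ Real.sqrt (qform a X ξ + 1) := fun X ξ =>
    (Real.le_sqrt' one_pos).2 (by nlinarith [hh0 X ξ])
  have hsi1 : ∀ X ξ, (Real.sqrt (qform a X ξ + 1))⁻¹ ≤ 1 := fun X ξ => by
    rw [inv_le_one_iff₀]; right; exact hs1 X ξ
  have hsi0 : ∀ X ξ, (0:ℝ) ≤ (Real.sqrt (qform a X ξ + 1))⁻¹ := fun X ξ => by positivity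
  -- lower bound on K + 1 and inverse bounds
  have hKlb : ∀ X ξ, m / 2 * (1 + ‖ξ‖) ^ 2 ≤ qform A X ξ + 1 := by
    intro X ξ
    have h := (hA_ell X ξ).1
    have hn := norm_nonneg ξ
    nlinarith [mul_nonneg hm0.le (sq_nonneg (1 - ‖ξ‖)), sq_nonneg ‖ξ‖]
  have hti : ∀ X ξ, (qform A X ξ + 1)⁻¹ ≤ 2 / m * ((1 + ‖ξ‖) ^ 2)⁻¹ := by
    intro X ξ
    have hpos : (0:ℝ) < m / 2 * (1 + ‖ξ‖) ^ 2 := by positivity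
    calc (qform A X ξ + 1)⁻¹ ≤ (m / 2 * (1 + ‖ξ‖) ^ 2)⁻¹ :=
          inv_anti₀ hpos (hKlb X ξ)
    _ = 2 / m * ((1 + ‖ξ‖) ^ 2)⁻¹ := by
        rw [mul_inv]
        congr 1
        field_simp
  have hti0 : ∀ X ξ, (0:ℝ) ≤ (qform A X ξ + 1)⁻¹ := fun X ξ =>
    inv_nonneg.2 (ht0 X ξ).le
  have ht2i0 : ∀ X ξ, (0:ℝ) ≤ ((qform A X ξ + 1) ^ 2)⁻¹ := fun X ξ => by positivity
  have hKt2 : ∀ X ξ, qform A X ξ * ((qform A X ξ + 1) ^ 2)⁻¹ ≤ (qform A X ξ + 1)⁻¹ := by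
    intro X ξ
    have htne := (ht0 X ξ).ne'
    have h1 : (qform A X ξ + 1)⁻¹ = (qform A X ξ + 1) * ((qform A X ξ + 1) ^ 2)⁻¹ := by
      field_simp
    rw [h1]
    nlinarith [ht2i0 X ξ]
  have ht2i : ∀ X ξ, ((qform A X ξ + 1) ^ 2)⁻¹ ≤ (2 / m) ^ 2 * (((1 + ‖ξ‖) ^ 2)⁻¹) ^ 2 := by
    intro X ξ
    rw [← inv_pow, ← mul_pow]
    exact pow_le_pow_left₀ (hti0 X ξ) (hti X ξ) 2
  have hv1 : ∀ ξ : EuclideanSpace ℝ (Fin 3), (((1 + ‖ξ‖) ^ 2)⁻¹) ^ 2 = ((1 + ‖ξ‖) ^ 4)⁻¹ := by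
    intro ξ
    rw [← inv_pow, ← pow_mul]
    norm_num
  have hv0 : ∀ ξ : EuclideanSpace ℝ (Fin 3), (0:ℝ) ≤ ((1 + ‖ξ‖) ^ 2)⁻¹ := fun ξ => by positivity
  have hvle1 : ∀ ξ : EuclideanSpace ℝ (Fin 3), ((1 + ‖ξ‖) ^ 2)⁻¹ ≤ 1 := by
    intro ξ
    rw [inv_le_one_iff₀]; right; nlinarith [norm_nonneg ξ]
  -- bound on the scaled Fourier factor
  have hp : ∀ κ : ℝ, 1 ≤ κ → ∀ ξ : EuclideanSpace ℝ (Fin 3),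
      ‖fourierHat ρ (κ⁻¹ • ξ)‖ ≤ Cρ * κ ^ 2 * ((1 + ‖ξ‖) ^ 2)⁻¹ := by
    intro κ hκ ξ
    have hκ0 : (0:ℝ) < κ := lt_of_lt_of_le one_pos hκ
    have hnκ : ‖κ⁻¹ • ξ‖ = κ⁻¹ * ‖ξ‖ := by
      rw [norm_smul, Real.norm_eq_abs, abs_inv, abs_of_pos hκ0]
    have hd := hdecay (κ⁻¹ • ξ)
    rw [hnκ] at hd
    have hsq : (1 + ‖ξ‖) ^ 2 ≤ κ ^ 2 * (1 + κ⁻¹ * ‖ξ‖) ^ 2 := by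
      have hκξ : κ * (1 + κ⁻¹ * ‖ξ‖) = κ + ‖ξ‖ := by field_simp
      nlinarith [norm_nonneg ξ]
    have hfn := norm_nonneg (fourierHat ρ (κ⁻¹ • ξ))
    rw [show Cρ * κ ^ 2 * ((1 + ‖ξ‖) ^ 2)⁻¹ = Cρ * κ ^ 2 / (1 + ‖ξ‖) ^ 2 by ring,
      le_div_iff₀ (by positivity)]
    nlinarith [mul_le_mul_of_nonneg_left hsq hfn]
  -- continuity facts
  have hqa : ∀ X, Continuous fun ξ : EuclideanSpace ℝ (Fin 3) => qform a X ξ := qform_continuous a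
  have hqA : ∀ X, Continuous fun ξ : EuclideanSpace ℝ (Fin 3) => qform A X ξ := qform_continuous A
  have hsc : ∀ X, Continuous fun ξ : EuclideanSpace ℝ (Fin 3) =>
      (Real.sqrt (qform a X ξ + 1))⁻¹ := by
    intro X
    refine (Real.continuous_sqrt.comp ((hqa X).add continuous_const)).inv₀ fun ξ => ?_
    have := hs1 X ξ
    positivity
  have htc : ∀ X, Continuous fun ξ : EuclideanSpace ℝ (Fin 3) => (qform A X ξ + 1)⁻¹ :=
    fun X => ((hqA X).add continuous_const).inv₀ fun ξ => (ht0 X ξ).ne'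
  have ht2c : ∀ X, Continuous fun ξ : EuclideanSpace ℝ (Fin 3) => ((qform A X ξ + 1) ^ 2)⁻¹ :=
    fun X => (((hqA X).add continuous_const).pow 2).inv₀ fun ξ => by
      exact pow_ne_zero 2 (ht0 X ξ).ne'
  have hPc : ∀ κ : ℝ, Continuous fun ξ : EuclideanSpace ℝ (Fin 3) =>
      ‖fourierHat ρ (κ⁻¹ • ξ)‖ ^ 2 := fun κ =>
    ((fourierHat_continuous ρ).comp (continuous_const_smul _)).norm.pow 2
  -- master integrability criterion
  have master : ∀ (f : EuclideanSpace ℝ (Fin 3) → ℝ) (B : ℝ), Continuous f →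
      (∀ ξ, |f ξ| ≤ B * ((1 + ‖ξ‖) ^ 4)⁻¹) → Integrable f := by
    intro f B hc hB
    refine (integrable_inv_pow_four.const_mul B).mono' hc.aestronglyMeasurable
      (Filter.Eventually.of_forall fun ξ => ?_)
    simpa [Real.norm_eq_abs] using hB ξ
  -- square bounds on the Fourier factor
  have hQ0 : (0:ℝ) ≤ ‖fourierHat ρ 0‖ ^ 2 := sq_nonneg _
  have hQle : ‖fourierHat ρ 0‖ ^ 2 ≤ Cρ ^ 2 := by
    nlinarith [hb0 0, norm_nonneg (fourierHat ρ 0)]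
  have hPle : ∀ κ : ℝ, ∀ ξ : EuclideanSpace ℝ (Fin 3),
      ‖fourierHat ρ (κ⁻¹ • ξ)‖ ^ 2 ≤ Cρ ^ 2 := fun κ ξ => by
    nlinarith [hb0 (κ⁻¹ • ξ), norm_nonneg (fourierHat ρ (κ⁻¹ • ξ))]
  have hP2 : ∀ κ : ℝ, 1 ≤ κ → ∀ ξ : EuclideanSpace ℝ (Fin 3),
      ‖fourierHat ρ (κ⁻¹ • ξ)‖ ^ 2 ≤ Cρ ^ 2 * κ ^ 2 * ((1 + ‖ξ‖) ^ 2)⁻¹ := by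
    intro κ hκ ξ
    have h1 := hp κ hκ ξ
    have h2 := hb0 (κ⁻¹ • ξ)
    have h0 := norm_nonneg (fourierHat ρ (κ⁻¹ • ξ))
    nlinarith [hv0 ξ, mul_le_mul h1 h2 h0 (by positivity)]
  -- integrability of the three integrands
  have hI1 : ∀ κ : ℝ, 1 ≤ κ → ∀ X : EuclideanSpace ℝ (Fin 3),
      Integrable (fun ξ : EuclideanSpace ℝ (Fin 3) =>
        (-((Real.sqrt (qform a X ξ + 1))⁻¹ * (qform A X ξ + 1)⁻¹) +
            1 / 2 * qform A X ξ *
              ((Real.sqrt (qform a X ξ + 1))⁻¹ * ((qform A X ξ + 1) ^ 2)⁻¹)) *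
          ‖fourierHat ρ (κ⁻¹ • ξ)‖ ^ 2) := by
    intro κ hκ X
    refine master _ (3 * Cρ ^ 2 * κ ^ 2 / m)
      (((((hsc X).mul (htc X)).neg).add
        (((continuous_const.mul (hqA X))).mul ((hsc X).mul (ht2c X)))).mul (hPc κ)) fun ξ => ?_
    have hsi1' := hsi1 X ξ
    have hsi0' := hsi0 X ξ
    have hti' := hti X ξ
    have hti0' := hti0 X ξ
    have hKt2' := hKt2 X ξ
    have hK0' := hK0 X ξ
    have ht2i0' := ht2i0 X ξ
    have hP2' := hP2 κ hκ ξ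
    have hv0' := hv0 ξ
    have h1 : (Real.sqrt (qform a X ξ + 1))⁻¹ * (qform A X ξ + 1)⁻¹
        ≤ 2 / m * ((1 + ‖ξ‖) ^ 2)⁻¹ := by
      nlinarith [mul_le_mul hsi1' hti' hti0' zero_le_one]
    have h2 : 1 / 2 * qform A X ξ *
        ((Real.sqrt (qform a X ξ + 1))⁻¹ * ((qform A X ξ + 1) ^ 2)⁻¹)
        ≤ 1 / 2 * (2 / m * ((1 + ‖ξ‖) ^ 2)⁻¹) := by
      have hx : (Real.sqrt (qform a X ξ + 1))⁻¹ * (qform A X ξ * ((qform A X ξ + 1) ^ 2)⁻¹)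
          ≤ 1 * (qform A X ξ + 1)⁻¹ :=
        mul_le_mul hsi1' hKt2' (mul_nonneg hK0' ht2i0') zero_le_one
      rw [one_mul] at hx
      have hx2 : (Real.sqrt (qform a X ξ + 1))⁻¹ * (qform A X ξ * ((qform A X ξ + 1) ^ 2)⁻¹)
          ≤ 2 / m * ((1 + ‖ξ‖) ^ 2)⁻¹ := hx.trans hti'
      calc 1 / 2 * qform A X ξ *
          ((Real.sqrt (qform a X ξ + 1))⁻¹ * ((qform A X ξ + 1) ^ 2)⁻¹)
          = 1 / 2 * ((Real.sqrt (qform a X ξ + 1))⁻¹ *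
            (qform A X ξ * ((qform A X ξ + 1) ^ 2)⁻¹)) := by ring
        _ ≤ 1 / 2 * (2 / m * ((1 + ‖ξ‖) ^ 2)⁻¹) := by linarith
    have hpre : |(-((Real.sqrt (qform a X ξ + 1))⁻¹ * (qform A X ξ + 1)⁻¹) +
        1 / 2 * qform A X ξ *
          ((Real.sqrt (qform a X ξ + 1))⁻¹ * ((qform A X ξ + 1) ^ 2)⁻¹))|
        ≤ 3 / 2 * (2 / m * ((1 + ‖ξ‖) ^ 2)⁻¹) := by
      have ha1 : (0:ℝ) ≤ (Real.sqrt (qform a X ξ + 1))⁻¹ * (qform A X ξ + 1)⁻¹ :=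
        mul_nonneg hsi0' hti0'
      have ha2 : (0:ℝ) ≤ 1 / 2 * qform A X ξ *
          ((Real.sqrt (qform a X ξ + 1))⁻¹ * ((qform A X ξ + 1) ^ 2)⁻¹) :=
        mul_nonneg (mul_nonneg (by norm_num) hK0') (mul_nonneg hsi0' ht2i0')
      calc |(-((Real.sqrt (qform a X ξ + 1))⁻¹ * (qform A X ξ + 1)⁻¹) +
          1 / 2 * qform A X ξ *
            ((Real.sqrt (qform a X ξ + 1))⁻¹ * ((qform A X ξ + 1) ^ 2)⁻¹))|
          ≤ |(-((Real.sqrt (qform a X ξ + 1))⁻¹ * (qform A X ξ + 1)⁻¹))| +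
            |1 / 2 * qform A X ξ *
              ((Real.sqrt (qform a X ξ + 1))⁻¹ * ((qform A X ξ + 1) ^ 2)⁻¹)| := abs_add_le _ _
      _ = (Real.sqrt (qform a X ξ + 1))⁻¹ * (qform A X ξ + 1)⁻¹ +
            1 / 2 * qform A X ξ *
              ((Real.sqrt (qform a X ξ + 1))⁻¹ * ((qform A X ξ + 1) ^ 2)⁻¹) := by
          rw [abs_neg, abs_of_nonneg ha1, abs_of_nonneg ha2]
      _ ≤ 3 / 2 * (2 / m * ((1 + ‖ξ‖) ^ 2)⁻¹) := by linarith
    rw [← hv1 ξ, abs_mul, abs_of_nonneg (sq_nonneg ‖fourierHat ρ (κ⁻¹ • ξ)‖)]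
    have hB0 : (0:ℝ) ≤ 3 / 2 * (2 / m * ((1 + ‖ξ‖) ^ 2)⁻¹) :=
      mul_nonneg (by norm_num) (mul_nonneg (div_nonneg (by norm_num) hm0.le) hv0')
    have hbig := mul_le_mul hpre hP2' (sq_nonneg ‖fourierHat ρ (κ⁻¹ • ξ)‖) hB0
    calc |(-((Real.sqrt (qform a X ξ + 1))⁻¹ * (qform A X ξ + 1)⁻¹) +
        1 / 2 * qform A X ξ *
          ((Real.sqrt (qform a X ξ + 1))⁻¹ * ((qform A X ξ + 1) ^ 2)⁻¹))| *
          ‖fourierHat ρ (κ⁻¹ • ξ)‖ ^ 2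
        ≤ (3 / 2 * (2 / m * ((1 + ‖ξ‖) ^ 2)⁻¹)) *
          (Cρ ^ 2 * κ ^ 2 * ((1 + ‖ξ‖) ^ 2)⁻¹) := hbig
      _ = 3 * Cρ ^ 2 * κ ^ 2 / m * (((1 + ‖ξ‖) ^ 2)⁻¹) ^ 2 := by ring
  have hI2 : ∀ κ : ℝ, 1 ≤ κ → ∀ X : EuclideanSpace ℝ (Fin 3),
      Integrable (fun ξ : EuclideanSpace ℝ (Fin 3) =>
        (Real.sqrt (qform a X ξ + 1))⁻¹ * qform A X ξ * ((qform A X ξ + 1) ^ 2)⁻¹ *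
          ‖fourierHat ρ (κ⁻¹ • ξ)‖ ^ 2) := by
    intro κ hκ X
    refine master _ (2 * Cρ ^ 2 * κ ^ 2 / m)
      (((((hsc X).mul (hqA X)).mul (ht2c X))).mul (hPc κ)) fun ξ => ?_
    have hsi1' := hsi1 X ξ
    have hsi0' := hsi0 X ξ
    have hti' := hti X ξ
    have hti0' := hti0 X ξ
    have hKt2' := hKt2 X ξ
    have hK0' := hK0 X ξ
    have ht2i0' := ht2i0 X ξ
    have hP2' := hP2 κ hκ ξ
    have hv0' := hv0 ξ
    have hx : (Real.sqrt (qform a X ξ + 1))⁻¹ * qform A X ξ * ((qform A X ξ + 1) ^ 2)⁻¹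
        ≤ 2 / m * ((1 + ‖ξ‖) ^ 2)⁻¹ := by
      have hy : (Real.sqrt (qform a X ξ + 1))⁻¹ * (qform A X ξ * ((qform A X ξ + 1) ^ 2)⁻¹)
          ≤ 1 * (qform A X ξ + 1)⁻¹ :=
        mul_le_mul hsi1' hKt2' (mul_nonneg hK0' ht2i0') zero_le_one
      rw [one_mul] at hy
      have hy2 : (Real.sqrt (qform a X ξ + 1))⁻¹ * (qform A X ξ * ((qform A X ξ + 1) ^ 2)⁻¹)
          ≤ 2 / m * ((1 + ‖ξ‖) ^ 2)⁻¹ := hy.trans hti'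
      calc (Real.sqrt (qform a X ξ + 1))⁻¹ * qform A X ξ * ((qform A X ξ + 1) ^ 2)⁻¹
          = (Real.sqrt (qform a X ξ + 1))⁻¹ *
            (qform A X ξ * ((qform A X ξ + 1) ^ 2)⁻¹) := by ring
        _ ≤ 2 / m * ((1 + ‖ξ‖) ^ 2)⁻¹ := hy2
    have hx0 : (0:ℝ) ≤ (Real.sqrt (qform a X ξ + 1))⁻¹ * qform A X ξ *
        ((qform A X ξ + 1) ^ 2)⁻¹ := mul_nonneg (mul_nonneg hsi0' hK0') ht2i0'
    rw [← hv1 ξ, abs_mul,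
      abs_of_nonneg hx0, abs_of_nonneg (sq_nonneg ‖fourierHat ρ (κ⁻¹ • ξ)‖)]
    have hB0 : (0:ℝ) ≤ 2 / m * ((1 + ‖ξ‖) ^ 2)⁻¹ :=
      mul_nonneg (div_nonneg (by norm_num) hm0.le) hv0'
    have hbig := mul_le_mul hx hP2' (sq_nonneg ‖fourierHat ρ (κ⁻¹ • ξ)‖) hB0
    calc (Real.sqrt (qform a X ξ + 1))⁻¹ * qform A X ξ * ((qform A X ξ + 1) ^ 2)⁻¹ *
          ‖fourierHat ρ (κ⁻¹ • ξ)‖ ^ 2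
        ≤ (2 / m * ((1 + ‖ξ‖) ^ 2)⁻¹) * (Cρ ^ 2 * κ ^ 2 * ((1 + ‖ξ‖) ^ 2)⁻¹) := hbig
      _ = 2 * Cρ ^ 2 * κ ^ 2 / m * (((1 + ‖ξ‖) ^ 2)⁻¹) ^ 2 := by ring
  have hI3 : ∀ X : EuclideanSpace ℝ (Fin 3),
      Integrable (fun ξ : EuclideanSpace ℝ (Fin 3) =>
        (Real.sqrt (qform a X ξ + 1))⁻¹ * ((qform A X ξ + 1) ^ 2)⁻¹) := by
    intro X
    refine master _ ((2 / m) ^ 2) ((hsc X).mul (ht2c X)) fun ξ => ?_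
    have hx0 : (0:ℝ) ≤ (Real.sqrt (qform a X ξ + 1))⁻¹ * ((qform A X ξ + 1) ^ 2)⁻¹ :=
      mul_nonneg (hsi0 X ξ) (ht2i0 X ξ)
    rw [abs_of_nonneg hx0, ← hv1 ξ]
    nlinarith [mul_le_mul (hsi1 X ξ) (ht2i X ξ) (ht2i0 X ξ) zero_le_one,
      hsi0 X ξ, ht2i0 X ξ]
  -- pointwise bound for the error integrand
  have hbnd : ∀ κ : ℝ, ∀ ξ : EuclideanSpace ℝ (Fin 3),
      abs (((1 + ‖ξ‖) ^ 4)⁻¹ *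
        |‖fourierHat ρ (κ⁻¹ • ξ)‖ ^ 2 - ‖fourierHat ρ 0‖ ^ 2|) ≤
      2 * Cρ ^ 2 * ((1 + ‖ξ‖) ^ 4)⁻¹ := by
    intro κ ξ
    have hv40 : (0:ℝ) ≤ ((1 + ‖ξ‖) ^ 4)⁻¹ := by positivity
    have habs : |‖fourierHat ρ (κ⁻¹ • ξ)‖ ^ 2 - ‖fourierHat ρ 0‖ ^ 2| ≤ 2 * Cρ ^ 2 := by
      rw [abs_sub_le_iff]
      constructor
      · nlinarith [hPle κ ξ, hQ0]
      · nlinarith [hQle, sq_nonneg ‖fourierHat ρ (κ⁻¹ • ξ)‖]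
    rw [abs_mul, abs_of_nonneg hv40, abs_abs]
    nlinarith [mul_le_mul_of_nonneg_left habs hv40]
  have hFcont : ∀ κ : ℝ, Continuous (fun ξ : EuclideanSpace ℝ (Fin 3) =>
      ((1 + ‖ξ‖) ^ 4)⁻¹ * |‖fourierHat ρ (κ⁻¹ • ξ)‖ ^ 2 - ‖fourierHat ρ 0‖ ^ 2|) := by
    intro κ
    refine (((continuous_const.add continuous_norm).pow 4).inv₀ fun ξ => by
      have h : (0:ℝ) < 1 + ‖ξ‖ := by positivity
      exact pow_ne_zero 4 h.ne').mul ?_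
    exact ((hPc κ).sub continuous_const).abs
  have hFint : ∀ κ : ℝ, Integrable (fun ξ : EuclideanSpace ℝ (Fin 3) =>
      ((1 + ‖ξ‖) ^ 4)⁻¹ * |‖fourierHat ρ (κ⁻¹ • ξ)‖ ^ 2 - ‖fourierHat ρ 0‖ ^ 2|) := by
    intro κ
    exact master _ (2 * Cρ ^ 2) (hFcont κ) (hbnd κ)
  -- integrability of the error integrand with the actual symbols
  have hI4 : ∀ κ : ℝ, ∀ X : EuclideanSpace ℝ (Fin 3),
      Integrable (fun ξ : EuclideanSpace ℝ (Fin 3) =>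
        (Real.sqrt (qform a X ξ + 1))⁻¹ * ((qform A X ξ + 1) ^ 2)⁻¹ *
          (‖fourierHat ρ 0‖ ^ 2 - ‖fourierHat ρ (κ⁻¹ • ξ)‖ ^ 2)) := by
    intro κ X
    refine master _ ((2 / m) ^ 2 * (2 * Cρ ^ 2))
      (((hsc X).mul (ht2c X)).mul (continuous_const.sub (hPc κ))) fun ξ => ?_
    have hx0 : (0:ℝ) ≤ (Real.sqrt (qform a X ξ + 1))⁻¹ * ((qform A X ξ + 1) ^ 2)⁻¹ :=
      mul_nonneg (hsi0 X ξ) (ht2i0 X ξ)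
    have hx : (Real.sqrt (qform a X ξ + 1))⁻¹ * ((qform A X ξ + 1) ^ 2)⁻¹ ≤
        (2 / m) ^ 2 * ((1 + ‖ξ‖) ^ 4)⁻¹ := by
      rw [← hv1 ξ]
      nlinarith [mul_le_mul (hsi1 X ξ) (ht2i X ξ) (ht2i0 X ξ) zero_le_one,
        hsi0 X ξ, ht2i0 X ξ]
    have habs : |‖fourierHat ρ 0‖ ^ 2 - ‖fourierHat ρ (κ⁻¹ • ξ)‖ ^ 2| ≤ 2 * Cρ ^ 2 := by
      rw [abs_sub_le_iff]
      constructor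
      · nlinarith [hQle, sq_nonneg ‖fourierHat ρ (κ⁻¹ • ξ)‖]
      · nlinarith [hPle κ ξ, hQ0]
    rw [abs_mul, abs_of_nonneg hx0]
    calc (Real.sqrt (qform a X ξ + 1))⁻¹ * ((qform A X ξ + 1) ^ 2)⁻¹ *
          |‖fourierHat ρ 0‖ ^ 2 - ‖fourierHat ρ (κ⁻¹ • ξ)‖ ^ 2|
        ≤ ((2 / m) ^ 2 * ((1 + ‖ξ‖) ^ 4)⁻¹) * (2 * Cρ ^ 2) :=
          mul_le_mul hx habs (abs_nonneg _) (by positivity)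
      _ = (2 / m) ^ 2 * (2 * Cρ ^ 2) * ((1 + ‖ξ‖) ^ 4)⁻¹ := by ring
  -- dominated convergence
  have hlim : ∀ ξ : EuclideanSpace ℝ (Fin 3),
      Tendsto (fun κ : ℝ => ((1 + ‖ξ‖) ^ 4)⁻¹ *
        |‖fourierHat ρ (κ⁻¹ • ξ)‖ ^ 2 - ‖fourierHat ρ 0‖ ^ 2|) atTop (nhds 0) := by
    intro ξ
    have h1 : Tendsto (fun κ : ℝ => κ⁻¹ • ξ) atTop (nhds (0 : EuclideanSpace ℝ (Fin 3))) := by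
      have h := (tendsto_inv_atTop_zero (𝕜 := ℝ)).smul_const ξ
      simpa using h
    have h2 : Tendsto (fun κ : ℝ => ‖fourierHat ρ (κ⁻¹ • ξ)‖ ^ 2) atTop
        (nhds (‖fourierHat ρ 0‖ ^ 2)) :=
      (((fourierHat_continuous ρ).norm.pow 2).tendsto 0).comp h1
    have h3 := ((h2.sub_const (‖fourierHat ρ 0‖ ^ 2)).abs).const_mul (((1 + ‖ξ‖) ^ 4)⁻¹)
    simpa using h3
  have hF : Tendsto (fun κ : ℝ => ∫ ξ : EuclideanSpace ℝ (Fin 3),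
      ((1 + ‖ξ‖) ^ 4)⁻¹ * |‖fourierHat ρ (κ⁻¹ • ξ)‖ ^ 2 - ‖fourierHat ρ 0‖ ^ 2|) atTop
      (nhds 0) := by
    have h := tendsto_integral_filter_of_dominated_convergence (μ := volume)
      (bound := fun ξ : EuclideanSpace ℝ (Fin 3) => 2 * Cρ ^ 2 * ((1 + ‖ξ‖) ^ 4)⁻¹)
      (f := fun _ : EuclideanSpace ℝ (Fin 3) => (0:ℝ))
      (Filter.Eventually.of_forall fun κ : ℝ => (hFcont κ).aestronglyMeasurable)
      (Filter.Eventually.of_forall fun κ : ℝ =>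
        Filter.Eventually.of_forall fun ξ => by
          simpa only [Real.norm_eq_abs] using hbnd κ ξ)
      (integrable_inv_pow_four.const_mul _)
      (Filter.Eventually.of_forall hlim)
    simpa using h
  refine ⟨fun κ hκ X => ⟨hI1 κ hκ X, hI2 κ hκ X⟩, hI3, fun ε hε => ?_⟩
  have hc3 : (0:ℝ) < ((2 * Real.pi) ^ 3)⁻¹ := by positivity
  have hCB : (0:ℝ) < (2 / m) ^ 2 := pow_pos (div_pos two_pos hm0) 2
  have hd0 : (0:ℝ) < ((2 * Real.pi) ^ 3)⁻¹ * (2 / m) ^ 2 := mul_pos hc3 hCB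
  have hε' : 0 < ε / (((2 * Real.pi) ^ 3)⁻¹ * (2 / m) ^ 2 + 1) := div_pos hε (by linarith)
  have hev := (hF.eventually_lt_const hε').and (eventually_ge_atTop (1:ℝ))
  obtain ⟨κ₀, hκ₀⟩ := eventually_atTop.1 hev
  refine ⟨κ₀, fun κ hκ X => ?_⟩
  obtain ⟨hFκ, hκ1⟩ := hκ₀ κ hκ
  have hi1 := hI1 κ hκ1 X
  have hi2 := hI2 κ hκ1 X
  have hi3 := hI3 X
  have hi4 := hI4 κ X
  have hi2h : Integrable (fun ξ : EuclideanSpace ℝ (Fin 3) => 1 / 2 * ((Real.sqrt (qform a X ξ + 1))⁻¹ * qform A X ξ * ((qform A X ξ + 1) ^ 2)⁻¹ *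
          ‖fourierHat ρ (κ⁻¹ • ξ)‖ ^ 2)) :=
    hi2.const_mul (1 / 2)
  have hi3h : Integrable (fun ξ : EuclideanSpace ℝ (Fin 3) =>
      ‖fourierHat ρ 0‖ ^ 2 * ((Real.sqrt (qform a X ξ + 1))⁻¹ * ((qform A X ξ + 1) ^ 2)⁻¹)) :=
    hi3.const_mul (‖fourierHat ρ 0‖ ^ 2)
  have e0 : (∫ ξ : EuclideanSpace ℝ (Fin 3), (Real.sqrt (qform a X ξ + 1))⁻¹ * ((qform A X ξ + 1) ^ 2)⁻¹ *
          (‖fourierHat ρ 0‖ ^ 2 - ‖fourierHat ρ (κ⁻¹ • ξ)‖ ^ 2)) =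
      ∫ ξ : EuclideanSpace ℝ (Fin 3), ((-((Real.sqrt (qform a X ξ + 1))⁻¹ * (qform A X ξ + 1)⁻¹) +
            1 / 2 * qform A X ξ *
              ((Real.sqrt (qform a X ξ + 1))⁻¹ * ((qform A X ξ + 1) ^ 2)⁻¹)) *
          ‖fourierHat ρ (κ⁻¹ • ξ)‖ ^ 2 +
        (1 / 2 * ((Real.sqrt (qform a X ξ + 1))⁻¹ * qform A X ξ * ((qform A X ξ + 1) ^ 2)⁻¹ *
          ‖fourierHat ρ (κ⁻¹ • ξ)‖ ^ 2) + ‖fourierHat ρ 0‖ ^ 2 * ((Real.sqrt (qform a X ξ + 1))⁻¹ * ((qform A X ξ + 1) ^ 2)⁻¹))) := by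
    refine integral_congr_ae (Filter.Eventually.of_forall fun ξ => ?_)
    have hsne : Real.sqrt (qform a X ξ + 1) ≠ 0 :=
      ne_of_gt (lt_of_lt_of_le one_pos (hs1 X ξ))
    have htne : qform A X ξ + 1 ≠ 0 := (ht0 X ξ).ne'
    field_simp
    ring
  have e1 : (∫ ξ : EuclideanSpace ℝ (Fin 3), ((-((Real.sqrt (qform a X ξ + 1))⁻¹ * (qform A X ξ + 1)⁻¹) +
            1 / 2 * qform A X ξ *
              ((Real.sqrt (qform a X ξ + 1))⁻¹ * ((qform A X ξ + 1) ^ 2)⁻¹)) *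
          ‖fourierHat ρ (κ⁻¹ • ξ)‖ ^ 2 +
        (1 / 2 * ((Real.sqrt (qform a X ξ + 1))⁻¹ * qform A X ξ * ((qform A X ξ + 1) ^ 2)⁻¹ *
          ‖fourierHat ρ (κ⁻¹ • ξ)‖ ^ 2) + ‖fourierHat ρ 0‖ ^ 2 * ((Real.sqrt (qform a X ξ + 1))⁻¹ * ((qform A X ξ + 1) ^ 2)⁻¹)))) =
      (∫ ξ : EuclideanSpace ℝ (Fin 3), (-((Real.sqrt (qform a X ξ + 1))⁻¹ * (qform A X ξ + 1)⁻¹) +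
            1 / 2 * qform A X ξ *
              ((Real.sqrt (qform a X ξ + 1))⁻¹ * ((qform A X ξ + 1) ^ 2)⁻¹)) *
          ‖fourierHat ρ (κ⁻¹ • ξ)‖ ^ 2) +
      ∫ ξ : EuclideanSpace ℝ (Fin 3),
        (1 / 2 * ((Real.sqrt (qform a X ξ + 1))⁻¹ * qform A X ξ * ((qform A X ξ + 1) ^ 2)⁻¹ *
          ‖fourierHat ρ (κ⁻¹ • ξ)‖ ^ 2) + ‖fourierHat ρ 0‖ ^ 2 * ((Real.sqrt (qform a X ξ + 1))⁻¹ * ((qform A X ξ + 1) ^ 2)⁻¹)) :=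
    integral_add hi1 (hi2h.add hi3h)
  have e2 : (∫ ξ : EuclideanSpace ℝ (Fin 3),
        (1 / 2 * ((Real.sqrt (qform a X ξ + 1))⁻¹ * qform A X ξ * ((qform A X ξ + 1) ^ 2)⁻¹ *
          ‖fourierHat ρ (κ⁻¹ • ξ)‖ ^ 2) + ‖fourierHat ρ 0‖ ^ 2 * ((Real.sqrt (qform a X ξ + 1))⁻¹ * ((qform A X ξ + 1) ^ 2)⁻¹))) =
      (∫ ξ : EuclideanSpace ℝ (Fin 3), 1 / 2 * ((Real.sqrt (qform a X ξ + 1))⁻¹ * qform A X ξ * ((qform A X ξ + 1) ^ 2)⁻¹ *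
          ‖fourierHat ρ (κ⁻¹ • ξ)‖ ^ 2)) +
      ∫ ξ : EuclideanSpace ℝ (Fin 3), ‖fourierHat ρ 0‖ ^ 2 * ((Real.sqrt (qform a X ξ + 1))⁻¹ * ((qform A X ξ + 1) ^ 2)⁻¹) :=
    integral_add hi2h hi3h
  have e3 : (∫ ξ : EuclideanSpace ℝ (Fin 3), 1 / 2 * ((Real.sqrt (qform a X ξ + 1))⁻¹ * qform A X ξ * ((qform A X ξ + 1) ^ 2)⁻¹ *
          ‖fourierHat ρ (κ⁻¹ • ξ)‖ ^ 2)) =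
      1 / 2 * ∫ ξ : EuclideanSpace ℝ (Fin 3), (Real.sqrt (qform a X ξ + 1))⁻¹ * qform A X ξ * ((qform A X ξ + 1) ^ 2)⁻¹ *
          ‖fourierHat ρ (κ⁻¹ • ξ)‖ ^ 2 :=
    integral_const_mul _ _
  have e4 : (∫ ξ : EuclideanSpace ℝ (Fin 3), ‖fourierHat ρ 0‖ ^ 2 * ((Real.sqrt (qform a X ξ + 1))⁻¹ * ((qform A X ξ + 1) ^ 2)⁻¹)) =
      ‖fourierHat ρ 0‖ ^ 2 * ∫ ξ : EuclideanSpace ℝ (Fin 3), (Real.sqrt (qform a X ξ + 1))⁻¹ * ((qform A X ξ + 1) ^ 2)⁻¹ :=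
    integral_const_mul _ _
  have heq : (∫ ξ : EuclideanSpace ℝ (Fin 3), (Real.sqrt (qform a X ξ + 1))⁻¹ * ((qform A X ξ + 1) ^ 2)⁻¹ *
          (‖fourierHat ρ 0‖ ^ 2 - ‖fourierHat ρ (κ⁻¹ • ξ)‖ ^ 2)) =
      (∫ ξ : EuclideanSpace ℝ (Fin 3), (-((Real.sqrt (qform a X ξ + 1))⁻¹ * (qform A X ξ + 1)⁻¹) +
            1 / 2 * qform A X ξ *
              ((Real.sqrt (qform a X ξ + 1))⁻¹ * ((qform A X ξ + 1) ^ 2)⁻¹)) *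
          ‖fourierHat ρ (κ⁻¹ • ξ)‖ ^ 2) +
      (1 / 2 * (∫ ξ : EuclideanSpace ℝ (Fin 3), (Real.sqrt (qform a X ξ + 1))⁻¹ * qform A X ξ * ((qform A X ξ + 1) ^ 2)⁻¹ *
          ‖fourierHat ρ (κ⁻¹ • ξ)‖ ^ 2) +
       ‖fourierHat ρ 0‖ ^ 2 * ∫ ξ : EuclideanSpace ℝ (Fin 3), (Real.sqrt (qform a X ξ + 1))⁻¹ * ((qform A X ξ + 1) ^ 2)⁻¹) := by
    rw [e0, e1, e2, e3, e4]
  have hrw : ((2 * Real.pi) ^ 3 : ℝ)⁻¹ *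
        (∫ ξ : EuclideanSpace ℝ (Fin 3),
          (-((Real.sqrt (qform a X ξ + 1))⁻¹ * (qform A X ξ + 1)⁻¹) +
              1 / 2 * qform A X ξ *
                ((Real.sqrt (qform a X ξ + 1))⁻¹ * ((qform A X ξ + 1) ^ 2)⁻¹)) *
            ‖fourierHat ρ (κ⁻¹ • ξ)‖ ^ 2) -
      (-(1 / 2) * ((2 * Real.pi) ^ 3 : ℝ)⁻¹ *
        ∫ ξ : EuclideanSpace ℝ (Fin 3),
          (Real.sqrt (qform a X ξ + 1))⁻¹ * qform A X ξ * ((qform A X ξ + 1) ^ 2)⁻¹ *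
            ‖fourierHat ρ (κ⁻¹ • ξ)‖ ^ 2) -
      (-(‖fourierHat ρ 0‖ ^ 2) * ((2 * Real.pi) ^ 3 : ℝ)⁻¹ *
        ∫ ξ : EuclideanSpace ℝ (Fin 3),
          (Real.sqrt (qform a X ξ + 1))⁻¹ * ((qform A X ξ + 1) ^ 2)⁻¹) =
      ((2 * Real.pi) ^ 3 : ℝ)⁻¹ * ∫ ξ : EuclideanSpace ℝ (Fin 3),
        (Real.sqrt (qform a X ξ + 1))⁻¹ * ((qform A X ξ + 1) ^ 2)⁻¹ *
          (‖fourierHat ρ 0‖ ^ 2 - ‖fourierHat ρ (κ⁻¹ • ξ)‖ ^ 2) := by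
    rw [heq]
    ring
  rw [hrw, abs_mul, abs_of_pos hc3]
  have h7 : |∫ ξ : EuclideanSpace ℝ (Fin 3),
      (Real.sqrt (qform a X ξ + 1))⁻¹ * ((qform A X ξ + 1) ^ 2)⁻¹ *
        (‖fourierHat ρ 0‖ ^ 2 - ‖fourierHat ρ (κ⁻¹ • ξ)‖ ^ 2)| ≤
      ∫ ξ : EuclideanSpace ℝ (Fin 3),
        |(Real.sqrt (qform a X ξ + 1))⁻¹ * ((qform A X ξ + 1) ^ 2)⁻¹ *
          (‖fourierHat ρ 0‖ ^ 2 - ‖fourierHat ρ (κ⁻¹ • ξ)‖ ^ 2)| := by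
    exact norm_integral_le_integral_norm
      (μ := volume) (fun ξ : EuclideanSpace ℝ (Fin 3) =>
        (Real.sqrt (qform a X ξ + 1))⁻¹ * ((qform A X ξ + 1) ^ 2)⁻¹ *
          (‖fourierHat ρ 0‖ ^ 2 - ‖fourierHat ρ (κ⁻¹ • ξ)‖ ^ 2))
  have h8 : (∫ ξ : EuclideanSpace ℝ (Fin 3),
      |(Real.sqrt (qform a X ξ + 1))⁻¹ * ((qform A X ξ + 1) ^ 2)⁻¹ *
        (‖fourierHat ρ 0‖ ^ 2 - ‖fourierHat ρ (κ⁻¹ • ξ)‖ ^ 2)|) ≤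
      ∫ ξ : EuclideanSpace ℝ (Fin 3), (2 / m) ^ 2 *
        (((1 + ‖ξ‖) ^ 4)⁻¹ * |‖fourierHat ρ (κ⁻¹ • ξ)‖ ^ 2 - ‖fourierHat ρ 0‖ ^ 2|) := by
    refine integral_mono hi4.abs ((hFint κ).const_mul _) fun ξ => ?_
    have hx0 : (0:ℝ) ≤ (Real.sqrt (qform a X ξ + 1))⁻¹ * ((qform A X ξ + 1) ^ 2)⁻¹ :=
      mul_nonneg (hsi0 X ξ) (ht2i0 X ξ)
    have hx : (Real.sqrt (qform a X ξ + 1))⁻¹ * ((qform A X ξ + 1) ^ 2)⁻¹ ≤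
        (2 / m) ^ 2 * ((1 + ‖ξ‖) ^ 4)⁻¹ := by
      rw [← hv1 ξ]
      nlinarith [mul_le_mul (hsi1 X ξ) (ht2i X ξ) (ht2i0 X ξ) zero_le_one,
        hsi0 X ξ, ht2i0 X ξ]
    calc |(Real.sqrt (qform a X ξ + 1))⁻¹ * ((qform A X ξ + 1) ^ 2)⁻¹ *
          (‖fourierHat ρ 0‖ ^ 2 - ‖fourierHat ρ (κ⁻¹ • ξ)‖ ^ 2)|
        = (Real.sqrt (qform a X ξ + 1))⁻¹ * ((qform A X ξ + 1) ^ 2)⁻¹ *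
          |‖fourierHat ρ 0‖ ^ 2 - ‖fourierHat ρ (κ⁻¹ • ξ)‖ ^ 2| := by
          rw [abs_mul, abs_of_nonneg hx0]
      _ = (Real.sqrt (qform a X ξ + 1))⁻¹ * ((qform A X ξ + 1) ^ 2)⁻¹ *
          |‖fourierHat ρ (κ⁻¹ • ξ)‖ ^ 2 - ‖fourierHat ρ 0‖ ^ 2| := by
          rw [abs_sub_comm]
      _ ≤ ((2 / m) ^ 2 * ((1 + ‖ξ‖) ^ 4)⁻¹) *
          |‖fourierHat ρ (κ⁻¹ • ξ)‖ ^ 2 - ‖fourierHat ρ 0‖ ^ 2| :=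
          mul_le_mul_of_nonneg_right hx (abs_nonneg _)
      _ = (2 / m) ^ 2 * (((1 + ‖ξ‖) ^ 4)⁻¹ *
          |‖fourierHat ρ (κ⁻¹ • ξ)‖ ^ 2 - ‖fourierHat ρ 0‖ ^ 2|) := by ring
  rw [integral_const_mul] at h8
  set Fκ : ℝ := ∫ ξ : EuclideanSpace ℝ (Fin 3),
      ((1 + ‖ξ‖) ^ 4)⁻¹ * |‖fourierHat ρ (κ⁻¹ • ξ)‖ ^ 2 - ‖fourierHat ρ 0‖ ^ 2| with hFκdef
  have hFnonneg : 0 ≤ Fκ := integral_nonneg fun ξ => by positivity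
  have hstep : ((2 * Real.pi) ^ 3 : ℝ)⁻¹ * |∫ ξ : EuclideanSpace ℝ (Fin 3),
      (Real.sqrt (qform a X ξ + 1))⁻¹ * ((qform A X ξ + 1) ^ 2)⁻¹ *
        (‖fourierHat ρ 0‖ ^ 2 - ‖fourierHat ρ (κ⁻¹ • ξ)‖ ^ 2)| ≤
      ((2 * Real.pi) ^ 3 : ℝ)⁻¹ * ((2 / m) ^ 2 * Fκ) := by
    have := le_trans h7 h8
    exact mul_le_mul_of_nonneg_left this hc3.le
  have hlt : ((2 * Real.pi) ^ 3 : ℝ)⁻¹ * ((2 / m) ^ 2 * Fκ) < ε := by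
    have h9 : ((2 * Real.pi) ^ 3 : ℝ)⁻¹ * (2 / m) ^ 2 * Fκ <
        ((2 * Real.pi) ^ 3 : ℝ)⁻¹ * (2 / m) ^ 2 *
          (ε / (((2 * Real.pi) ^ 3)⁻¹ * (2 / m) ^ 2 + 1)) :=
      mul_lt_mul_of_pos_left hFκ hd0
    have h10 : ((2 * Real.pi) ^ 3 : ℝ)⁻¹ * (2 / m) ^ 2 *
        (ε / (((2 * Real.pi) ^ 3)⁻¹ * (2 / m) ^ 2 + 1)) < ε := by
      rw [mul_div_assoc', div_lt_iff₀ (by linarith : (0:ℝ) <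
        ((2 * Real.pi) ^ 3)⁻¹ * (2 / m) ^ 2 + 1)]
      nlinarith
    nlinarith
  calc ((2 * Real.pi) ^ 3 : ℝ)⁻¹ * |∫ ξ : EuclideanSpace ℝ (Fin 3),
      (Real.sqrt (qform a X ξ + 1))⁻¹ * ((qform A X ξ + 1) ^ 2)⁻¹ *
        (‖fourierHat ρ 0‖ ^ 2 - ‖fourierHat ρ (κ⁻¹ • ξ)‖ ^ 2)| ≤
      ((2 * Real.pi) ^ 3 : ℝ)⁻¹ * ((2 / m) ^ 2 * Fκ) := hstep
    _ < ε := hlt
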